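/- Let Δ be a reduced root system with positive roots Δ⁺ and let γ be the highest root of an irreducible component of Δ. If α, β ∈ Φ_γ⁺ ∪ {γ} and α + β ∈ Δ, then α + β = γ. -/

import Mathlib

open RealInnerProductSpace

/-- Key lemma: if `α` and `γ - α` are both positive roots, then `⟪γ, α⟫ > 0`. -/
lemma aux_pos {V : Type*} [NormedAddCommGroup V] [InnerProductSpace ℝ V]
    (Δ Δpos : Set V)
    (hnz : ∀ α ∈ Δ, α ≠ (0 : V))
    (hneg : ∀ α ∈ Δ, -α ∈ Δ)
    (hreduced : ∀ α ∈ Δ, ∀ t : ℝ, t • α ∈ Δ → t = 1 ∨ t = -1)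
    (hrefl : ∀ α ∈ Δ, ∀ β ∈ Δ, β - (2 * ⟪β, α⟫ / ⟪α, α⟫) • α ∈ Δ)
    (hint : ∀ α ∈ Δ, ∀ β ∈ Δ, ∃ n : ℤ, 2 * ⟪β, α⟫ / ⟪α, α⟫ = (n : ℝ))
    (hpos_sub : Δpos ⊆ Δ)
    (conn : V → V → Prop)
    (hconn : ∀ a b, conn a b ↔ a ∈ Δ ∧ b ∈ Δ ∧ ⟪a, b⟫ ≠ 0)
    (γ : V) (hγ : γ ∈ Δpos)
    (hhigh : ∀ α ∈ Δpos, Relation.EqvGen conn γ α → γ + α ∉ Δ)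
    (α : V) (hαp : α ∈ Δpos) (hγα : γ - α ∈ Δpos) :
    0 < ⟪γ, α⟫ := by
  have hγΔ : γ ∈ Δ := hpos_sub hγ
  have hαΔ : α ∈ Δ := hpos_sub hαp
  have hδΔ : γ - α ∈ Δ := hpos_sub hγα
  have hγ0 : γ ≠ 0 := hnz γ hγΔ
  have hα0 : α ≠ 0 := hnz α hαΔ
  have hγγ : (0:ℝ) < ⟪γ, γ⟫ := by
    rw [real_inner_self_eq_norm_mul_norm]
    exact mul_pos (norm_pos_iff.mpr hγ0) (norm_pos_iff.mpr hγ0)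
  have hαα : (0:ℝ) < ⟪α, α⟫ := by
    rw [real_inner_self_eq_norm_mul_norm]
    exact mul_pos (norm_pos_iff.mpr hα0) (norm_pos_iff.mpr hα0)
  have hαγ : ⟪α, γ⟫ = ⟪γ, α⟫ := real_inner_comm γ α
  by_contra hcon
  push_neg at hcon
  have key : γ + α ∈ Δ ∧ Relation.EqvGen conn γ α := by
    rcases hcon.lt_or_eq with hlt | heq
    · -- negative inner product case
      obtain ⟨m, hm⟩ := hint γ hγΔ α hαΔ
      obtain ⟨n, hn⟩ := hint α hαΔ γ hγΔ
      have hconnγα : Relation.EqvGen conn γ α :=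
        Relation.EqvGen.rel _ _ ((hconn γ α).mpr ⟨hγΔ, hαΔ, ne_of_lt hlt⟩)
      have hmR : (m:ℝ) < 0 := by
        rw [← hm, hαγ]; exact div_neg_of_neg_of_pos (by linarith) hγγ
      have hnR : (n:ℝ) < 0 := by
        rw [← hn]; exact div_neg_of_neg_of_pos (by linarith) hαα
      have hm1 : m ≤ -1 := by have : m < 0 := by exact_mod_cast hmR
                              omega
      have hn1 : n ≤ -1 := by have : n < 0 := by exact_mod_cast hnR
                              omega
      have hcs : ⟪γ, α⟫ * ⟪γ, α⟫ ≤ ⟪γ, γ⟫ * ⟪α, α⟫ := real_inner_mul_inner_self_le γ α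
      have hprod : (m:ℝ) * (n:ℝ) * (⟪γ, γ⟫ * ⟪α, α⟫) = 4 * (⟪γ, α⟫ * ⟪γ, α⟫) := by
        rw [← hm, ← hn, hαγ]
        field_simp
        ring
      have hmn4 : m * n ≤ 4 := by
        have : (m:ℝ) * (n:ℝ) ≤ 4 := by nlinarith [mul_pos hγγ hαα, hcs, hprod]
        exact_mod_cast this
      by_cases h4 : m * n = 4
      · -- equality case of Cauchy-Schwarz: α is a multiple of γ
        exfalso
        have heqcs : ⟪γ, α⟫ * ⟪γ, α⟫ = ⟪γ, γ⟫ * ⟪α, α⟫ := by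
          have h4R : (m:ℝ) * (n:ℝ) = 4 := by exact_mod_cast h4
          nlinarith
        have hnorm : ‖⟪γ, α⟫‖ = ‖γ‖ * ‖α‖ := by
          rw [Real.norm_eq_abs]
          have h1 : |⟪γ, α⟫| ^ 2 = (‖γ‖ * ‖α‖) ^ 2 := by
            rw [sq_abs]
            rw [real_inner_self_eq_norm_mul_norm, real_inner_self_eq_norm_mul_norm] at heqcs
            ring_nf at heqcs ⊢
            linarith
          exact (sq_eq_sq₀ (abs_nonneg _) (by positivity)).mp h1
        obtain ⟨r, hr0, hr⟩ := (norm_inner_eq_norm_iff hγ0 hα0).mp hnorm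
        rcases hreduced γ hγΔ r (hr ▸ hαΔ) with rfl | rfl
        · rw [hr, one_smul] at hlt; linarith
        · rw [hr] at hγα
          have h2γ : (2:ℝ) • γ ∈ Δ := by
            have : γ - (-1:ℝ) • γ = (2:ℝ) • γ := by module
            rw [this] at hγα; exact hpos_sub hγα
          rcases hreduced γ hγΔ 2 h2γ with h | h <;> norm_num at h
      · -- not parallel: m = -1 or n = -1, reflection produces γ + α
        have hmn3 : m * n ≤ 3 := by omega
        have hor : m = -1 ∨ n = -1 := by
          by_contra h
          push_neg at h
          have h1 : m ≤ -2 := by omega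
          have h2 : n ≤ -2 := by omega
          nlinarith
        rcases hor with rfl | rfl
        · have hr := hrefl γ hγΔ α hαΔ
          rw [hm] at hr
          have : α - ((-1:ℤ):ℝ) • γ = γ + α := by push_cast; module
          rw [this] at hr
          exact ⟨hr, hconnγα⟩
        · have hr := hrefl α hαΔ γ hγΔ
          rw [hn] at hr
          have : γ - ((-1:ℤ):ℝ) • α = γ + α := by push_cast; module
          rw [this] at hr
          exact ⟨hr, hconnγα⟩
    · -- orthogonal case
      have h2 : 2 * ⟪γ - α, γ⟫ / ⟪γ, γ⟫ = (2:ℝ) := by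
        rw [inner_sub_left, hαγ, heq]
        field_simp
        ring
      have hr := hrefl γ hγΔ (γ - α) hδΔ
      rw [h2] at hr
      have h3 : (γ - α) - (2:ℝ) • γ = -(γ + α) := by module
      rw [h3] at hr
      have hga : γ + α ∈ Δ := by simpa using hneg _ hr
      have c1 : conn γ (γ - α) := (hconn _ _).mpr ⟨hγΔ, hδΔ, by
        rw [inner_sub_right, heq]; simpa using ne_of_gt hγγ⟩
      have c2 : conn (γ - α) α := (hconn _ _).mpr ⟨hδΔ, hαΔ, by
        rw [inner_sub_left, heq]; simpa using ne_of_gt hαα⟩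
      exact ⟨hga, Relation.EqvGen.trans _ _ _ (Relation.EqvGen.rel _ _ c1)
        (Relation.EqvGen.rel _ _ c2)⟩
  exact hhigh α hαp key.2 key.1

/-- Let `Δ` be a reduced root system with positive roots `Δpos`, and let `γ`
be the highest root of an irreducible component of `Δ` (formalized: `γ` is positive and
`γ + α ∉ Δ` for every positive root `α` in the same irreducible component of `Δ`, components
being the classes of the equivalence generated by non-orthogonality).  If
`α, β ∈ Φ_γ⁺ ∪ {γ}` and `α + β ∈ Δ`, then `α + β = γ`. -/
theorem stmt1 {V : Type*} [NormedAddCommGroup V] [InnerProductSpace ℝ V]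
    (Δ Δpos : Set V)
    (hfin : Δ.Finite)
    (hnz : ∀ α ∈ Δ, α ≠ (0 : V))
    (hneg : ∀ α ∈ Δ, -α ∈ Δ)
    (hreduced : ∀ α ∈ Δ, ∀ t : ℝ, t • α ∈ Δ → t = 1 ∨ t = -1)
    (hrefl : ∀ α ∈ Δ, ∀ β ∈ Δ, β - (2 * ⟪β, α⟫ / ⟪α, α⟫) • α ∈ Δ)
    (hint : ∀ α ∈ Δ, ∀ β ∈ Δ, ∃ n : ℤ, 2 * ⟪β, α⟫ / ⟪α, α⟫ = (n : ℝ))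
    (hpos_sub : Δpos ⊆ Δ)
    (hpos_part : ∀ α ∈ Δ, (α ∈ Δpos ∧ -α ∉ Δpos) ∨ (α ∉ Δpos ∧ -α ∈ Δpos))
    (hpos_closed : ∀ α ∈ Δpos, ∀ β ∈ Δpos, α + β ∈ Δ → α + β ∈ Δpos)
    -- `conn` generates the decomposition of `Δ` into irreducible components
    (conn : V → V → Prop)
    (hconn : ∀ a b, conn a b ↔ a ∈ Δ ∧ b ∈ Δ ∧ ⟪a, b⟫ ≠ 0)
    (γ : V) (hγ : γ ∈ Δpos)
    -- `γ` is the highest root of its irreducible component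
    (hhigh : ∀ α ∈ Δpos, Relation.EqvGen conn γ α → γ + α ∉ Δ)
    (α β : V)
    (hα : α = γ ∨ (α ∈ Δpos ∧ γ - α ∈ Δpos))
    (hβ : β = γ ∨ (β ∈ Δpos ∧ γ - β ∈ Δpos))
    (hsum : α + β ∈ Δ) :
    α + β = γ := by
  have hγΔ : γ ∈ Δ := hpos_sub hγ
  have hγ0 : γ ≠ 0 := hnz γ hγΔ
  have hγγ : (0:ℝ) < ⟪γ, γ⟫ := by
    rw [real_inner_self_eq_norm_mul_norm]
    exact mul_pos (norm_pos_iff.mpr hγ0) (norm_pos_iff.mpr hγ0)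
  -- no positive root x with γ - x positive can have γ + x a root
  have key : ∀ x ∈ Δpos, γ - x ∈ Δpos → γ + x ∉ Δ := by
    intro x hx hgx
    have hpos := aux_pos Δ Δpos hnz hneg hreduced hrefl hint hpos_sub conn hconn γ hγ
      hhigh x hx hgx
    exact hhigh x hx (Relation.EqvGen.rel _ _
      ((hconn γ x).mpr ⟨hγΔ, hpos_sub hx, ne_of_gt hpos⟩))
  rcases hα with hA | ⟨hαp, hγα⟩
  · rcases hβ with hB | ⟨hβp, hγβ⟩
    · exfalso
      rw [hA, hB] at hsum
      have h2 : (2:ℝ) • γ ∈ Δ := by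
        have h3 : (2:ℝ) • γ = γ + γ := by module
        rw [h3]; exact hsum
      rcases hreduced γ hγΔ 2 h2 with h | h <;> norm_num at h
    · exfalso
      rw [hA] at hsum
      exact key β hβp hγβ hsum
  · rcases hβ with hB | ⟨hβp, hγβ⟩
    · exfalso
      rw [hB, add_comm] at hsum
      exact key α hαp hγα hsum
    · -- main case : α, β ∈ Φ_γ⁺
      have hαΔ : α ∈ Δ := hpos_sub hαp
      have hβΔ : β ∈ Δ := hpos_sub hβp
      have hδpos : α + β ∈ Δpos := hpos_closed α hαp β hβp hsum
      have hδ0 : α + β ≠ 0 := hnz _ hsum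
      have hδδ : (0:ℝ) < ⟪α + β, α + β⟫ := by
        rw [real_inner_self_eq_norm_mul_norm]
        exact mul_pos (norm_pos_iff.mpr hδ0) (norm_pos_iff.mpr hδ0)
      have htα : 0 < ⟪γ, α⟫ := aux_pos Δ Δpos hnz hneg hreduced hrefl hint hpos_sub
        conn hconn γ hγ hhigh α hαp hγα
      have htβ : 0 < ⟪γ, β⟫ := aux_pos Δ Δpos hnz hneg hreduced hrefl hint hpos_sub
        conn hconn γ hγ hhigh β hβp hγβ
      have ht : 0 < ⟪γ, α + β⟫ := by rw [inner_add_right]; linarith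
      have htc : ⟪α + β, γ⟫ = ⟪γ, α + β⟫ := real_inner_comm γ (α + β)
      obtain ⟨m, hm⟩ := hint γ hγΔ (α + β) hsum
      obtain ⟨n, hn⟩ := hint (α + β) hsum γ hγΔ
      obtain ⟨ma, hma⟩ := hint γ hγΔ α hαΔ
      obtain ⟨mb, hmb⟩ := hint γ hγΔ β hβΔ
      have hma1 : 1 ≤ ma := by
        have : (0:ℝ) < ma := by
          rw [← hma, real_inner_comm γ α]
          exact div_pos (by linarith) hγγ
        have : 0 < ma := by exact_mod_cast this
        omega
      have hmb1 : 1 ≤ mb := by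
        have : (0:ℝ) < mb := by
          rw [← hmb, real_inner_comm γ β]
          exact div_pos (by linarith) hγγ
        have : 0 < mb := by exact_mod_cast this
        omega
      have hmab : (m:ℝ) = (ma:ℝ) + (mb:ℝ) := by
        rw [← hm, ← hma, ← hmb, inner_add_left]
        field_simp
      have hm2 : 2 ≤ m := by
        have : (2:ℝ) ≤ (m:ℝ) := by
          rw [hmab]
          have h1 : (1:ℝ) ≤ (ma:ℝ) := by exact_mod_cast hma1
          have h2 : (1:ℝ) ≤ (mb:ℝ) := by exact_mod_cast hmb1
          linarith
        exact_mod_cast this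
      have hn1 : 1 ≤ n := by
        have : (0:ℝ) < n := by
          rw [← hn]
          exact div_pos (by linarith) hδδ
        have : 0 < n := by exact_mod_cast this
        omega
      have hcs : ⟪γ, α + β⟫ * ⟪γ, α + β⟫ ≤ ⟪γ, γ⟫ * ⟪α + β, α + β⟫ :=
        real_inner_mul_inner_self_le γ (α + β)
      have hprod : (m:ℝ) * (n:ℝ) * (⟪γ, γ⟫ * ⟪α + β, α + β⟫)
          = 4 * (⟪γ, α + β⟫ * ⟪γ, α + β⟫) := by
        rw [← hm, ← hn, htc]
        field_simp
        ring
      have hmn4 : m * n ≤ 4 := by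
        have : (m:ℝ) * (n:ℝ) ≤ 4 := by nlinarith [mul_pos hγγ hδδ, hcs, hprod]
        exact_mod_cast this
      by_cases h4 : m * n = 4
      · -- equality in Cauchy-Schwarz : α + β is a multiple of γ
        have heqcs : ⟪γ, α + β⟫ * ⟪γ, α + β⟫ = ⟪γ, γ⟫ * ⟪α + β, α + β⟫ := by
          have h4R : (m:ℝ) * (n:ℝ) = 4 := by exact_mod_cast h4
          nlinarith [mul_pos hγγ hδδ]
        have hnorm : ‖⟪γ, α + β⟫‖ = ‖γ‖ * ‖α + β‖ := by
          rw [Real.norm_eq_abs]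
          have h1 : |⟪γ, α + β⟫| ^ 2 = (‖γ‖ * ‖α + β‖) ^ 2 := by
            rw [sq_abs]
            rw [real_inner_self_eq_norm_mul_norm, real_inner_self_eq_norm_mul_norm] at heqcs
            ring_nf at heqcs ⊢
            linarith
          exact (sq_eq_sq₀ (abs_nonneg _) (by positivity)).mp h1
        obtain ⟨r, hr0, hr⟩ := (norm_inner_eq_norm_iff hγ0 hδ0).mp hnorm
        rcases hreduced γ hγΔ r (hr ▸ hsum) with rfl | rfl
        · rw [hr, one_smul]
        · exfalso
          rw [hr] at ht
          rw [real_inner_smul_self_right] at ht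
          nlinarith [mul_pos (norm_pos_iff.mpr hγ0) (norm_pos_iff.mpr hγ0)]
      · -- n = 1, so γ - (α + β) is a root
        exfalso
        have hn1' : n = 1 := by
          have h2n : 2 * n ≤ m * n := mul_le_mul_of_nonneg_right hm2 (by omega)
          have : m * n ≤ 3 := by omega
          omega
        have hr := hrefl (α + β) hsum γ hγΔ
        rw [hn, hn1'] at hr
        have h1 : γ - ((1:ℤ):ℝ) • (α + β) = γ - (α + β) := by push_cast; module
        rw [h1] at hr
        rcases hpos_part _ hr with ⟨hp, _⟩ | ⟨_, hp⟩
        · -- γ - (α+β) positive: contradicts m ≥ 2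
          have hpos := aux_pos Δ Δpos hnz hneg hreduced hrefl hint hpos_sub conn hconn
            γ hγ hhigh (γ - (α + β)) hp (by rw [sub_sub_cancel]; exact hδpos)
          rw [inner_sub_right] at hpos
          have hmval : 2 * ⟪α + β, γ⟫ = (m:ℝ) * ⟪γ, γ⟫ := by
            field_simp at hm
            linarith [hm]
          have hm2R : (2:ℝ) ≤ (m:ℝ) := by exact_mod_cast hm2
          rw [htc] at hmval
          nlinarith
        · -- (α+β) - γ positive: contradicts maximality of γ
          rw [neg_sub] at hp
          have hδγΔ : α + β - γ ∈ Δ := hpos_sub hp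
          have hnval : 2 * ⟪γ, α + β⟫ = ⟪α + β, α + β⟫ := by
            rw [hn1'] at hn
            field_simp at hn
            push_cast at hn
            linarith [hn]
          have c1 : conn γ (α + β) := (hconn _ _).mpr ⟨hγΔ, hsum, ne_of_gt ht⟩
          have c2 : conn (α + β) (α + β - γ) := (hconn _ _).mpr ⟨hsum, hδγΔ, by
            rw [inner_sub_right, htc]
            intro hzero
            nlinarith⟩
          have hh := hhigh _ hp (Relation.EqvGen.trans _ _ _
            (Relation.EqvGen.rel _ _ c1) (Relation.EqvGen.rel _ _ c2))
          apply hh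
          have : γ + (α + β - γ) = α + β := by module
          rw [this]
          exact hsum
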